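/- Fix an integer N ≥ 2, the imaginary unit i, and parameters λ_{N,1},…,λ_{N,N} ∈ ℂ (the top row). Points of ℂ^{N(N−1)/2} are written as triangular arrays λ = (λ_{nj})_{1≤j≤n≤N−1}; e_{nj} denotes the corresponding standard basis vector, and λ_{N,m} always refers to the fixed parameters. For f : ℂ^{N(N−1)/2} → ℂ define the Gelfand–Zetlin operators: (E_{nn}f)(λ) = −i·(∑_{j=1}^{n} λ_{nj} − ∑_{j=1}^{n−1} λ_{n−1,j})·f(λ) for 1 ≤ n ≤ N; for 1 ≤ n ≤ N−1, (E_{n,n+1}f)(λ) = −i·∑_{j=1}^{n} [∏_{r=1}^{n+1}(λ_{nj} − λ_{n+1,r} − i/2) / ∏_{s≤n, s≠j}(λ_{nj} − λ_{ns})]·f(λ − i·e_{nj}) and (E_{n+1,n}f)(λ) = −i·∑_{j=1}^{n} [∏_{r=1}^{n−1}(λ_{nj} − λ_{n−1,r} + i/2) / ∏_{s≤n, s≠j}(λ_{nj} − λ_{ns})]·f(λ + i·e_{nj}) (empty products equal 1). Then for all n ∈ {1,…,N}, m ∈ {1,…,N−1}, every function f, and every λ whose row-m entries are pairwise distinct: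 ((E_{nn}∘E_{m,m+1} − E_{m,m+1}∘E_{nn}) f)(λ) = (δ_{nm} − δ_{n,m+1})·(E_{m,m+1} f)(λ), and ((E_{nn}∘E_{m+1,m} − E_{m+1,m}∘E_{nn}) f)(λ) = −(δ_{nm} − δ_{n,m+1})·(E_{m+1,m} f)(λ). -/
import Mathlib


noncomputable section

open Finset

/-- Update a triangular array of complex numbers at position `(n, j)`. -/
def upd (lam : ℕ → ℕ → ℂ) (n j : ℕ) (c : ℂ) : ℕ → ℕ → ℂ :=
  Function.update lam n (Function.update (lam n) j c)

/-- Entry `λ_{n,j}` of a triangular array, where row `N` is given by the fixed top-row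
parameters `Λ`. -/
def ent (N : ℕ) (Λ : ℕ → ℂ) (lam : ℕ → ℕ → ℂ) (n j : ℕ) : ℂ :=
  if n = N then Λ j else lam n j

/-- Gelfand–Zetlin Cartan generator `E_{nn}`. -/
def Ediag (N : ℕ) (Λ : ℕ → ℂ) (n : ℕ) (f : (ℕ → ℕ → ℂ) → ℂ) (lam : ℕ → ℕ → ℂ) : ℂ :=
  -Complex.I * ((∑ j ∈ Icc 1 n, ent N Λ lam n j) - ∑ j ∈ Icc 1 (n - 1), ent N Λ lam (n - 1) j)
    * f lam

/-- Gelfand–Zetlin raising generator `E_{n,n+1}`. -/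
def Eup (N : ℕ) (Λ : ℕ → ℂ) (n : ℕ) (f : (ℕ → ℕ → ℂ) → ℂ) (lam : ℕ → ℕ → ℂ) : ℂ :=
  -Complex.I * ∑ j ∈ Icc 1 n,
    (∏ r ∈ Icc 1 (n + 1), (lam n j - ent N Λ lam (n + 1) r - Complex.I / 2)) /
        (∏ s ∈ (Icc 1 n).erase j, (lam n j - lam n s)) *
      f (upd lam n j (lam n j - Complex.I))

/-- Gelfand–Zetlin lowering generator `E_{n+1,n}`. -/
def Elow (n : ℕ) (f : (ℕ → ℕ → ℂ) → ℂ) (lam : ℕ → ℕ → ℂ) : ℂ :=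
  -Complex.I * ∑ j ∈ Icc 1 n,
    (∏ r ∈ Icc 1 (n - 1), (lam n j - lam (n - 1) r + Complex.I / 2)) /
        (∏ s ∈ (Icc 1 n).erase j, (lam n j - lam n s)) *
      f (upd lam n j (lam n j + Complex.I))

def Dsum (N : ℕ) (Λ : ℕ → ℂ) (n : ℕ) (lam : ℕ → ℕ → ℂ) : ℂ :=
  (∑ j ∈ Icc 1 n, ent N Λ lam n j) - ∑ j ∈ Icc 1 (n - 1), ent N Λ lam (n - 1) j

lemma ent_upd (N : ℕ) (Λ : ℕ → ℂ) (lam : ℕ → ℕ → ℂ) (m j : ℕ) (c : ℂ) (hm : m ≠ N)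
    (k r : ℕ) :
    ent N Λ (upd lam m j c) k r = if k = m ∧ r = j then c else ent N Λ lam k r := by
  unfold ent upd
  rcases eq_or_ne k N with hk | hk
  · subst hk
    simp [Ne.symm hm]
  · simp only [hk, if_neg hk, Function.update_apply]
    by_cases hkm : k = m <;> by_cases hrj : r = j <;> simp_all [Function.update_apply]

lemma sum_ent_upd_ne (N : ℕ) (Λ : ℕ → ℂ) (lam : ℕ → ℕ → ℂ) (m j : ℕ) (c : ℂ)
    (hm : m ≠ N) (k : ℕ) (hk : k ≠ m) (s : Finset ℕ) :
    ∑ r ∈ s, ent N Λ (upd lam m j c) k r = ∑ r ∈ s, ent N Λ lam k r := by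
  refine Finset.sum_congr rfl fun r _ => ?_
  rw [ent_upd N Λ lam m j c hm]
  simp [hk]

lemma sum_ent_upd_eq (N : ℕ) (Λ : ℕ → ℂ) (lam : ℕ → ℕ → ℂ) (m j : ℕ) (c : ℂ)
    (hm : m ≠ N) (hj : j ∈ Icc 1 m) :
    ∑ r ∈ Icc 1 m, ent N Λ (upd lam m j c) m r
      = (∑ r ∈ Icc 1 m, ent N Λ lam m r) + (c - lam m j) := by
  have h : ∀ r ∈ Icc 1 m, ent N Λ (upd lam m j c) m r
      = ent N Λ lam m r + (if r = j then c - lam m j else 0) := by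
    intro r hr
    rw [ent_upd N Λ lam m j c hm]
    unfold ent
    by_cases hrj : r = j <;> simp [hrj, hm]
  rw [Finset.sum_congr rfl h, Finset.sum_add_distrib, Finset.sum_ite_eq' (Icc 1 m) j,
    if_pos hj]

lemma Dshift (N : ℕ) (Λ : ℕ → ℂ) (n m j : ℕ) (lam : ℕ → ℕ → ℂ) (c : ℂ)
    (hmN : m ≠ N) (hn1 : 1 ≤ n) (hj : j ∈ Icc 1 m) :
    Dsum N Λ n (upd lam m j c)
      = Dsum N Λ n lam
        + ((if n = m then 1 else 0) - if n = m + 1 then 1 else 0) * (c - lam m j) := by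
  have hm1 : 1 ≤ m := (Finset.mem_Icc.mp hj).1.trans (Finset.mem_Icc.mp hj).2
  unfold Dsum
  rcases eq_or_ne n m with h1 | h1
  · subst h1
    have h2 : n - 1 ≠ n := by omega
    have h3 : n ≠ n + 1 := by omega
    rw [sum_ent_upd_eq N Λ lam n j c hmN hj, sum_ent_upd_ne N Λ lam n j c hmN _ h2]
    simp [h3]; ring
  · rcases eq_or_ne n (m + 1) with h2 | h2
    · subst h2
      have h3 : m + 1 - 1 = m := by omega
      rw [sum_ent_upd_ne N Λ lam m j c hmN _ (by omega), h3,
        sum_ent_upd_eq N Λ lam m j c hmN hj]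
      simp [h1]; ring
    · have h3 : n - 1 ≠ m := by omega
      rw [sum_ent_upd_ne N Λ lam m j c hmN _ h1, sum_ent_upd_ne N Λ lam m j c hmN _ h3]
      simp [h1, h2]

/-- The Cartan–Chevalley relations `[E_{nn}, E_{m,m+1}] = (δ_{nm} − δ_{n,m+1})E_{m,m+1}`
and `[E_{nn}, E_{m+1,m}] = −(δ_{nm} − δ_{n,m+1})E_{m+1,m}` for the Gelfand–Zetlin
realization by first-order difference operators. -/
theorem gz_cartan_chevalley_relations
    (N : ℕ) (hN : 2 ≤ N) (Λ : ℕ → ℂ) (n m : ℕ)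
    (hn1 : 1 ≤ n) (hn2 : n ≤ N) (hm1 : 1 ≤ m) (hm2 : m ≤ N - 1)
    (f : (ℕ → ℕ → ℂ) → ℂ) (lam : ℕ → ℕ → ℂ)
    (hrow : ∀ s ∈ Icc 1 m, ∀ p ∈ Icc 1 m, s ≠ p → lam m s ≠ lam m p) :
    (Ediag N Λ n (Eup N Λ m f) lam - Eup N Λ m (Ediag N Λ n f) lam =
      ((if n = m then 1 else 0) - if n = m + 1 then 1 else 0) * Eup N Λ m f lam) ∧
    (Ediag N Λ n (Elow m f) lam - Elow m (Ediag N Λ n f) lam =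
      -((if n = m then 1 else 0) - if n = m + 1 then 1 else 0) * Elow m f lam) := by
  have hmN : m ≠ N := by omega
  set δ : ℂ := ((if n = m then 1 else 0) - if n = m + 1 then 1 else 0) with hδ
  constructor
  · have e1 : Ediag N Λ n (Eup N Λ m f) lam
        = -Complex.I * Dsum N Λ n lam * Eup N Λ m f lam := rfl
    have e2 : Eup N Λ m (Ediag N Λ n f) lam
        = -Complex.I * ∑ j ∈ Icc 1 m,
            (∏ r ∈ Icc 1 (m + 1), (lam m j - ent N Λ lam (m + 1) r - Complex.I / 2)) /
                (∏ s ∈ (Icc 1 m).erase j, (lam m j - lam m s)) *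
              (-Complex.I * Dsum N Λ n (upd lam m j (lam m j - Complex.I))
                * f (upd lam m j (lam m j - Complex.I))) := rfl
    have e3 : Eup N Λ m f lam
        = -Complex.I * ∑ j ∈ Icc 1 m,
            (∏ r ∈ Icc 1 (m + 1), (lam m j - ent N Λ lam (m + 1) r - Complex.I / 2)) /
                (∏ s ∈ (Icc 1 m).erase j, (lam m j - lam m s)) *
              f (upd lam m j (lam m j - Complex.I)) := rfl
    have h3 : ∀ j ∈ Icc 1 m,
        (∏ r ∈ Icc 1 (m + 1), (lam m j - ent N Λ lam (m + 1) r - Complex.I / 2)) /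
              (∏ s ∈ (Icc 1 m).erase j, (lam m j - lam m s)) *
            (-Complex.I * Dsum N Λ n (upd lam m j (lam m j - Complex.I))
              * f (upd lam m j (lam m j - Complex.I)))
          = (-Complex.I * (Dsum N Λ n lam + δ * (-Complex.I))) *
            ((∏ r ∈ Icc 1 (m + 1), (lam m j - ent N Λ lam (m + 1) r - Complex.I / 2)) /
                (∏ s ∈ (Icc 1 m).erase j, (lam m j - lam m s)) *
              f (upd lam m j (lam m j - Complex.I))) := by
      intro j hj
      rw [Dshift N Λ n m j lam _ hmN hn1 hj, ← hδ]
      ring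
    rw [e1, e2, Finset.sum_congr rfl h3, ← Finset.mul_sum, e3]
    set S := ∑ j ∈ Icc 1 m,
        (∏ r ∈ Icc 1 (m + 1), (lam m j - ent N Λ lam (m + 1) r - Complex.I / 2)) /
            (∏ s ∈ (Icc 1 m).erase j, (lam m j - lam m s)) *
          f (upd lam m j (lam m j - Complex.I)) with hs
    linear_combination (δ * S * Complex.I) * Complex.I_sq
  · have e1 : Ediag N Λ n (Elow m f) lam
        = -Complex.I * Dsum N Λ n lam * Elow m f lam := rfl
    have e2 : Elow m (Ediag N Λ n f) lam
        = -Complex.I * ∑ j ∈ Icc 1 m,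
            (∏ r ∈ Icc 1 (m - 1), (lam m j - lam (m - 1) r + Complex.I / 2)) /
                (∏ s ∈ (Icc 1 m).erase j, (lam m j - lam m s)) *
              (-Complex.I * Dsum N Λ n (upd lam m j (lam m j + Complex.I))
                * f (upd lam m j (lam m j + Complex.I))) := rfl
    have e3 : Elow m f lam
        = -Complex.I * ∑ j ∈ Icc 1 m,
            (∏ r ∈ Icc 1 (m - 1), (lam m j - lam (m - 1) r + Complex.I / 2)) /
                (∏ s ∈ (Icc 1 m).erase j, (lam m j - lam m s)) *
              f (upd lam m j (lam m j + Complex.I)) := rfl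
    have h3 : ∀ j ∈ Icc 1 m,
        (∏ r ∈ Icc 1 (m - 1), (lam m j - lam (m - 1) r + Complex.I / 2)) /
              (∏ s ∈ (Icc 1 m).erase j, (lam m j - lam m s)) *
            (-Complex.I * Dsum N Λ n (upd lam m j (lam m j + Complex.I))
              * f (upd lam m j (lam m j + Complex.I)))
          = (-Complex.I * (Dsum N Λ n lam + δ * Complex.I)) *
            ((∏ r ∈ Icc 1 (m - 1), (lam m j - lam (m - 1) r + Complex.I / 2)) /
                (∏ s ∈ (Icc 1 m).erase j, (lam m j - lam m s)) *
              f (upd lam m j (lam m j + Complex.I))) := by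
      intro j hj
      rw [Dshift N Λ n m j lam _ hmN hn1 hj, ← hδ]
      ring
    rw [e1, e2, Finset.sum_congr rfl h3, ← Finset.mul_sum, e3]
    set S := ∑ j ∈ Icc 1 m,
        (∏ r ∈ Icc 1 (m - 1), (lam m j - lam (m - 1) r + Complex.I / 2)) /
            (∏ s ∈ (Icc 1 m).erase j, (lam m j - lam m s)) *
          f (upd lam m j (lam m j + Complex.I)) with hs
    linear_combination (-(δ * S * Complex.I)) * Complex.I_sq
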